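/- For 0 ≤ ξ < 1, the integral ∫₀^π (1 − ξ cos ψ)^{-3/2} dψ equals the convergent series π Σ_{n≥0} [((1/2)_n (3/2)_n / (n!)²)] (2ξ/(1+ξ))ⁿ / (1+ξ)^{3/2}, and this series converges absolutely since 2ξ/(1+ξ) < 1. -/

import Mathlib

open Real

/-- Pochhammer symbol `(a)_n` for real `a`. -/
noncomputable def poch (a : ℝ) (n : ℕ) : ℝ := ∏ i ∈ Finset.range n, (a + i)

lemma poch_zero (a : ℝ) : poch a 0 = 1 := by simp [poch]

lemma poch_succ (a : ℝ) (n : ℕ) : poch a (n+1) = poch a n * (a + n) := by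
  simp [poch, Finset.prod_range_succ]

lemma poch_pos {a : ℝ} (ha : 0 < a) (n : ℕ) : 0 < poch a n :=
  Finset.prod_pos fun i _ => by positivity

/-- `c n = (3/2)_n / n!` -/
noncomputable def cc (n : ℕ) : ℝ := poch (3/2) n / n.factorial

lemma cc_zero : cc 0 = 1 := by simp [cc, poch_zero]

lemma cc_pos (n : ℕ) : 0 < cc n := by
  have := poch_pos (by norm_num : (0:ℝ) < 3/2) n
  have : (0:ℝ) < n.factorial := by positivity
  exact div_pos (poch_pos (by norm_num) n) this

lemma cc_succ (n : ℕ) : cc (n+1) = cc n * (3/2 + n) / (n+1) := by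
  have h : ((n+1).factorial : ℝ) = (n+1) * n.factorial := by
    rw [Nat.factorial_succ]; push_cast; ring
  rw [cc, cc, poch_succ, h]
  have h1 : (n.factorial : ℝ) ≠ 0 := by positivity
  have h2 : ((n:ℝ)+1) ≠ 0 := by positivity
  field_simp

lemma cc_le (n : ℕ) : cc n ≤ n + 1 := by
  induction n with
  | zero => simp [cc_zero]
  | succ n ih =>
    rw [cc_succ]
    have h2 : (0:ℝ) < n + 1 := by positivity
    rw [div_le_iff₀ h2]
    push_cast
    nlinarith [cc_pos n, cc_pos (n+1)]

lemma geom_bound {ρ : ℝ} (hρ0 : 0 < ρ) {K v : ℝ} (n : ℕ) (hK0 : 0 ≤ K)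
    (hK : K ≤ 8*(n:ℝ)^2+8) (hv0 : 0 ≤ v) (hv : v ≤ ρ^n) :
    K * v ≤ 8 * ((n:ℝ)^2 * ρ^n) + 8 * ρ^n := by
  have h := mul_le_mul hK hv hv0 (by positivity)
  nlinarith [pow_nonneg hρ0.le n]

set_option maxHeartbeats 1000000 in
lemma hasSum_cc {u : ℝ} (h0 : 0 ≤ u) (h1 : u < 1) :
    HasSum (fun n : ℕ => cc n * u ^ n) ((1 - u) ^ (-(3/2) : ℝ)) := by
  set ρ : ℝ := (1 + u) / 2 with hρ
  have hρhalf : (1:ℝ)/2 ≤ ρ := by rw [hρ]; linarith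
  have hρ0 : 0 < ρ := by linarith
  have hρ1 : ρ < 1 := by rw [hρ]; linarith
  have huρ : u < ρ := by rw [hρ]; linarith
  set t : Set ℝ := Set.Ioo (-ρ) ρ with ht_def
  have ht : IsOpen t := isOpen_Ioo
  have h't : IsPreconnected t := (convex_Ioo _ _).isPreconnected
  have hmem : ∀ y ∈ t, |y| ≤ ρ := fun y hy => le_of_lt (abs_lt.2 ⟨hy.1, hy.2⟩)
  have humem : u ∈ t := ⟨by linarith, huρ⟩
  have h0mem : (0:ℝ) ∈ t := ⟨by linarith, hρ0⟩
  set U : ℕ → ℝ := fun n => 8 * ((n:ℝ)^2 * ρ^n) + 8 * ρ^n with hU_def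
  have hρn : ‖ρ‖ < 1 := by rw [Real.norm_eq_abs, abs_of_pos hρ0]; exact hρ1
  have hU : Summable U :=
    ((summable_pow_mul_geometric_of_norm_lt_one 2 hρn).mul_left 8).add
      ((summable_geometric_of_norm_lt_one hρn).mul_left 8)
  set g : ℕ → ℝ → ℝ := fun n y => cc n * y ^ n with hg_def
  set g' : ℕ → ℝ → ℝ := fun n y => cc n * ((n:ℝ) * y ^ (n - 1)) with hg'_def
  have hg : ∀ n y, HasDerivAt (g n) (g' n y) y := by
    intro n y
    simp only [hg_def, hg'_def]
    exact (hasDerivAt_pow n y).const_mul (cc n)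
  have hρpow : ∀ m : ℕ, ρ ^ m ≤ 2 * ρ ^ (m + 1) := by
    intro m
    have h := pow_nonneg hρ0.le m
    have : ρ ^ (m+1) = ρ ^ m * ρ := pow_succ ρ m
    nlinarith
  have hg' : ∀ n, ∀ y ∈ t, ‖g' n y‖ ≤ U n := by
    intro n y hy
    have hyρ : |y| ≤ ρ := hmem y hy
    match n with
    | 0 =>
      have : g' 0 y = 0 := by simp [hg'_def]
      rw [this, norm_zero, hU_def]
      positivity
    | (m+1) =>
      have h1' : ‖g' (m+1) y‖ = (cc (m+1) * ((m:ℝ)+1)) * |y| ^ m := by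
        simp only [hg'_def, Real.norm_eq_abs, abs_mul, Nat.add_sub_cancel, abs_pow,
          Nat.abs_cast]
        rw [abs_of_pos (cc_pos _)]
        push_cast; ring
      rw [h1', hU_def]
      have hyp : |y| ^ m ≤ ρ ^ m := pow_le_pow_left₀ (abs_nonneg y) hyρ m
      have h2 := hρpow m
      have hccp := (cc_pos (m+1)).le
      have hcc := cc_le (m+1)
      have step1 : (cc (m+1) * ((m:ℝ)+1)) * |y| ^ m
          ≤ (cc (m+1) * ((m:ℝ)+1)) * (2 * ρ ^ (m+1)) := by
        apply mul_le_mul_of_nonneg_left (hyp.trans h2) (by positivity)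
      refine step1.trans ?_
      have heq : (cc (m+1) * ((m:ℝ)+1)) * (2 * ρ ^ (m+1))
          = (2 * cc (m+1) * ((m:ℝ)+1)) * ρ ^ (m+1) := by ring
      rw [heq]
      apply geom_bound hρ0 (m+1) (by positivity) ?_ (pow_nonneg hρ0.le _) le_rfl
      push_cast at hcc ⊢
      nlinarith
  have key_bound : ∀ (K : ℝ) (n : ℕ), 0 ≤ K → K ≤ 8*(n:ℝ)^2+8 →
      ∀ y ∈ t, ‖K / ((n:ℝ)+1) * (cc n * y ^ n)‖ ≤ U n := by
    intro K n hK0 hK y hy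
    have hyρ : |y| ≤ ρ := hmem y hy
    have hyp : |y| ^ n ≤ ρ ^ n := pow_le_pow_left₀ (abs_nonneg y) hyρ n
    have hcc := cc_le n
    have hccp := (cc_pos n).le
    have hn1 : (0:ℝ) < (n:ℝ)+1 := by positivity
    have h1' : ‖K / ((n:ℝ)+1) * (cc n * y ^ n)‖ = (K / ((n:ℝ)+1) * cc n) * |y| ^ n := by
      rw [Real.norm_eq_abs, abs_mul, abs_mul, abs_pow, abs_of_pos (cc_pos n),
        abs_of_nonneg (by positivity : (0:ℝ) ≤ K / ((n:ℝ)+1))]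
      ring
    rw [h1', hU_def]
    apply geom_bound hρ0 n ?_ ?_ (pow_nonneg (abs_nonneg y) n) hyp
    · positivity
    · have : K / ((n:ℝ)+1) * cc n ≤ K / ((n:ℝ)+1) * ((n:ℝ)+1) :=
        mul_le_mul_of_nonneg_left hcc (by positivity)
      rw [div_mul_cancel₀ K hn1.ne'] at this
      exact this.trans hK
  have hsum_of_mem : ∀ y ∈ t, Summable fun n => cc n * y ^ n := by
    intro y hy
    apply Summable.of_norm_bounded hU
    intro n
    have := key_bound ((n:ℝ)+1) n (by positivity) (by nlinarith [sq_nonneg ((n:ℝ)-1), Nat.cast_nonneg (α := ℝ) n]) y hy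
    rw [div_self (by positivity : ((n:ℝ)+1) ≠ 0), one_mul] at this
    exact this
  have hsum0 : Summable fun n => g n 0 := hsum_of_mem 0 h0mem
  set S : ℝ → ℝ := fun z => ∑' n, g n z with hS_def
  set A : ℝ → ℝ := fun y => ∑' n, g' n y with hA_def
  have hS : ∀ y ∈ t, HasDerivAt S (A y) y := fun y hy =>
    hasDerivAt_tsum_of_isPreconnected hU ht h't (fun n y _ => hg n y) hg' h0mem hsum0 hy
  have sum2 : ∀ y ∈ t, Summable fun n => g' n y := fun y hy =>
    Summable.of_norm_bounded hU (fun n => hg' n y hy)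
  have sum3 : ∀ y ∈ t, Summable fun n : ℕ => ((3:ℝ)/2 + n) * (cc n * y ^ n) := by
    intro y hy
    apply Summable.of_norm_bounded hU
    intro n
    have h := key_bound (((3:ℝ)/2 + n) * ((n:ℝ)+1)) n (by positivity)
      (by nlinarith [Nat.cast_nonneg (α := ℝ) n, sq_nonneg ((n:ℝ)-1)]) y hy
    rw [mul_div_assoc, div_self (by positivity : ((n:ℝ)+1) ≠ 0), mul_one] at h
    exact h
  have sum4 : ∀ y ∈ t, Summable fun n : ℕ => (n:ℝ) * (cc n * y ^ n) := by
    intro y hy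
    apply Summable.of_norm_bounded hU
    intro n
    have h := key_bound ((n:ℝ) * ((n:ℝ)+1)) n (by positivity)
      (by nlinarith [Nat.cast_nonneg (α := ℝ) n, sq_nonneg ((n:ℝ)-1)]) y hy
    rw [mul_div_assoc, div_self (by positivity : ((n:ℝ)+1) ≠ 0), mul_one] at h
    exact h
  have hODE : ∀ y ∈ t, (1 - y) * A y = (3/2) * S y := by
    intro y hy
    have ha : A y = ∑' n : ℕ, ((3:ℝ)/2 + n) * (cc n * y ^ n) := by
      show (∑' n, g' n y) = _
      rw [Summable.tsum_eq_zero_add (sum2 y hy)]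
      have hz : g' 0 y = 0 := by simp [hg'_def]
      rw [hz, zero_add]
      apply tsum_congr
      intro n
      have hne : ((n:ℝ)+1) ≠ 0 := by positivity
      simp only [hg'_def, Nat.add_sub_cancel]
      rw [cc_succ]
      push_cast
      field_simp
    have hb : y * A y = ∑' n : ℕ, (n:ℝ) * (cc n * y ^ n) := by
      show y * (∑' n, g' n y) = _
      rw [← tsum_mul_left]
      apply tsum_congr
      intro n
      match n with
      | 0 => simp [hg'_def]
      | (m+1) =>
        simp only [hg'_def, Nat.add_sub_cancel]
        have hyy : y * y ^ m = y ^ (m+1) := (pow_succ y m).symm ▸ by ring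
        push_cast
        calc y * (cc (m+1) * (((m:ℝ)+1) * y ^ m))
            = ((m:ℝ)+1) * (cc (m+1) * (y * y ^ m)) := by ring
          _ = ((m:ℝ)+1) * (cc (m+1) * y ^ (m+1)) := by rw [hyy]
    have hsplit : A y - y * A y = ∑' n : ℕ, (3:ℝ)/2 * (cc n * y ^ n) := by
      rw [hb, ha, ← Summable.tsum_sub (sum3 y hy) (sum4 y hy)]
      exact tsum_congr fun n => by ring
    have hSS : ∑' n : ℕ, (3:ℝ)/2 * (cc n * y ^ n) = (3/2) * S y := by
      rw [tsum_mul_left]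
    calc (1 - y) * A y = A y - y * A y := by ring
      _ = (3/2) * S y := by rw [hsplit, hSS]
  set F : ℝ → ℝ := fun y => S y * (1 - y) ^ ((3:ℝ)/2) with hF_def
  have hF : ∀ y ∈ t, HasDerivAt F 0 y := by
    intro y hy
    have hy2 : y < ρ := hy.2
    have h1y : (0:ℝ) < 1 - y := by linarith
    have hry : HasDerivAt (fun z : ℝ => (1 - z) ^ ((3:ℝ)/2))
        ((3:ℝ)/2 * (1 - y) ^ ((3:ℝ)/2 - 1) * (-1)) y := by
      have hbase : HasDerivAt (fun z : ℝ => 1 - z) (-1) y := by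
        simpa using (hasDerivAt_id y).const_sub 1
      exact (Real.hasDerivAt_rpow_const (Or.inl h1y.ne')).comp y hbase
    have hprod := (hS y hy).mul hry
    have hval : A y * (1 - y) ^ ((3:ℝ)/2) + S y * ((3:ℝ)/2 * (1 - y) ^ ((3:ℝ)/2 - 1) * (-1)) = 0 := by
      have h32 : (1 - y) ^ ((3:ℝ)/2) = (1 - y) ^ ((3:ℝ)/2 - 1) * (1 - y) := by
        rw [← Real.rpow_add_one h1y.ne' ((3:ℝ)/2 - 1)]
        norm_num
      rw [h32]
      have hode := hODE y hy
      linear_combination (1 - y) ^ ((3:ℝ)/2 - 1) * hode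
    rw [hval] at hprod
    exact hprod
  have hsub : Set.Icc (0:ℝ) u ⊆ t := fun z hz =>
    ⟨by linarith [hz.1], by linarith [hz.2, huρ]⟩
  have hcont : ContinuousOn F (Set.Icc 0 u) := fun z hz =>
    ((hF z (hsub hz)).continuousAt).continuousWithinAt
  have hderiv : ∀ z ∈ Set.Ico (0:ℝ) u, HasDerivWithinAt F 0 (Set.Ici z) z := fun z hz =>
    (hF z (hsub ⟨hz.1, hz.2.le⟩)).hasDerivWithinAt
  have hconst := constant_of_has_deriv_right_zero hcont hderiv u (Set.right_mem_Icc.2 h0)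
  have hS0 : S 0 = 1 := by
    rw [hS_def]
    simp only
    rw [tsum_eq_single 0 (fun n hn => by simp [hg_def, zero_pow hn])]
    simp [hg_def, cc_zero]
  have hF0 : F 0 = 1 := by rw [hF_def]; simp [hS0]
  have hFu : S u * (1 - u) ^ ((3:ℝ)/2) = 1 := by
    have h := hconst; rw [hF0] at h; exact h
  have h1u : (0:ℝ) < 1 - u := by linarith
  have hBpos : 0 < (1 - u) ^ ((3:ℝ)/2) := Real.rpow_pos_of_pos h1u _
  have hSu : S u = (1 - u) ^ (-(3/2) : ℝ) := by
    rw [Real.rpow_neg h1u.le]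
    exact eq_inv_of_mul_eq_one_left hFu
  have hhs := (hsum_of_mem u humem).hasSum
  have hfin : (∑' n, cc n * u ^ n) = S u := rfl
  rw [hfin, hSu] at hhs
  exact hhs

lemma prod_ratio (n : ℕ) :
    (∏ i ∈ Finset.range n, ((2*(i:ℝ)+1)/(2*i+2))) = poch (1/2) n / n.factorial := by
  have hfact : (n.factorial : ℝ) = ∏ i ∈ Finset.range n, ((i:ℝ)+1) := by
    induction n with
    | zero => simp
    | succ m ih =>
      rw [Finset.prod_range_succ, ← ih, Nat.factorial_succ]
      push_cast; ring
  rw [poch, hfact, ← Finset.prod_div_distrib]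
  apply Finset.prod_congr rfl
  intro i _
  have h1 : (2*(i:ℝ)+2) ≠ 0 := by positivity
  have h2 : ((i:ℝ)+1) ≠ 0 := by positivity
  field_simp
  ring

lemma integral_cos_half_pow (n : ℕ) :
    ∫ ψ in (0:ℝ)..π, Real.cos (ψ/2) ^ (2*n) = π * (poch (1/2) n / n.factorial) := by
  have hint : ∀ a b : ℝ, IntervalIntegrable (fun θ => Real.sin θ ^ (2*n)) MeasureTheory.volume a b :=
    fun a b => (continuous_sin.pow _).intervalIntegrable a b
  have h1 : (∫ ψ in (0:ℝ)..π, Real.cos (ψ/2) ^ (2*n))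
      = 2 * ∫ θ in (0:ℝ)..(π/2), Real.cos θ ^ (2*n) := by
    have h := intervalIntegral.integral_comp_div (a := (0:ℝ)) (b := π)
      (c := (2:ℝ)) (f := fun θ => Real.cos θ ^ (2*n)) two_ne_zero
    norm_num at h
    exact h
  have h2 : (∫ θ in (0:ℝ)..(π/2), Real.cos θ ^ (2*n))
      = ∫ θ in (0:ℝ)..(π/2), Real.sin θ ^ (2*n) := by
    have h := intervalIntegral.integral_comp_sub_left (a := (0:ℝ)) (b := π/2)
      (fun θ => Real.sin θ ^ (2*n)) (π/2)
    norm_num [Real.sin_pi_div_two_sub] at h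
    exact h
  have h3 : (∫ θ in (π/2:ℝ)..π, Real.sin θ ^ (2*n))
      = ∫ θ in (0:ℝ)..(π/2), Real.sin θ ^ (2*n) := by
    have h := intervalIntegral.integral_comp_sub_left (a := (0:ℝ)) (b := π/2)
      (fun θ => Real.sin θ ^ (2*n)) π
    have hππ : π - π/2 = π/2 := by ring
    rw [hππ, sub_zero] at h
    simp only [Real.sin_pi_sub] at h
    exact h.symm
  have h4 : (∫ θ in (0:ℝ)..π, Real.sin θ ^ (2*n))
      = 2 * ∫ θ in (0:ℝ)..(π/2), Real.sin θ ^ (2*n) := by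
    rw [← intervalIntegral.integral_add_adjacent_intervals (hint 0 (π/2)) (hint (π/2) π), h3]
    ring
  rw [h1, h2, ← h4, integral_sin_pow_even, prod_ratio]

lemma fact_prod (n : ℕ) : (n.factorial : ℝ) = ∏ i ∈ Finset.range n, ((i:ℝ)+1) := by
  induction n with
  | zero => simp
  | succ m ih => rw [Finset.prod_range_succ, ← ih, Nat.factorial_succ]; push_cast; ring

lemma comb_nonneg (n : ℕ) : 0 ≤ poch (1/2) n * poch (3/2) n / (n.factorial : ℝ)^2 := by
  have h1 := poch_pos (show (0:ℝ) < 1/2 by norm_num) n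
  have h2 := poch_pos (show (0:ℝ) < 3/2 by norm_num) n
  have h3 : (0:ℝ) < (n.factorial : ℝ) := by positivity
  positivity

lemma comb_le_one (n : ℕ) : poch (1/2) n * poch (3/2) n / (n.factorial : ℝ)^2 ≤ 1 := by
  have h3 : (0:ℝ) < (n.factorial : ℝ)^2 := by positivity
  rw [div_le_one h3]
  have he : poch (1/2) n * poch (3/2) n
      = ∏ i ∈ Finset.range n, (((1:ℝ)/2+i)*((3:ℝ)/2+i)) := by
    rw [poch, poch, ← Finset.prod_mul_distrib]
  have hf : ((n.factorial : ℝ))^2 = ∏ i ∈ Finset.range n, ((i:ℝ)+1)^2 := by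
    rw [fact_prod, ← Finset.prod_pow]
  rw [he, hf]
  apply Finset.prod_le_prod
  · intro i _
    have : (0:ℝ) ≤ (i:ℝ) := Nat.cast_nonneg i
    nlinarith
  · intro i _
    have : (0:ℝ) ≤ (i:ℝ) := Nat.cast_nonneg i
    nlinarith

theorem I1_series (ξ : ℝ) (h0 : 0 ≤ ξ) (h1 : ξ < 1) :
    Summable (fun n : ℕ =>
      |poch (1/2) n * poch (3/2) n / (n.factorial : ℝ)^2 * (2 * ξ / (1 + ξ)) ^ n|) ∧
    (∫ ψ in (0:ℝ)..π, (1 - ξ * Real.cos ψ) ^ (-(3/2) : ℝ)) =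
      π * (∑' n : ℕ,
        poch (1/2) n * poch (3/2) n / (n.factorial : ℝ)^2 * (2 * ξ / (1 + ξ)) ^ n)
        / (1 + ξ) ^ ((3/2) : ℝ) := by
  have hξ : (0:ℝ) < 1 + ξ := by linarith
  set x : ℝ := 2 * ξ / (1 + ξ) with hx_def
  have hx0 : 0 ≤ x := by positivity
  have hx1 : x < 1 := by rw [hx_def, div_lt_one hξ]; linarith
  constructor
  · apply Summable.of_nonneg_of_le (fun n => abs_nonneg _) (fun n => ?_)
      (summable_geometric_of_lt_one hx0 hx1)
    have hc0 := comb_nonneg n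
    have hc1 := comb_le_one n
    rw [abs_of_nonneg (mul_nonneg hc0 (pow_nonneg hx0 n))]
    exact mul_le_of_le_one_left (pow_nonneg hx0 n) hc1
  · -- pointwise expansion
    have hcossq : ∀ ψ : ℝ, 0 ≤ x * Real.cos (ψ/2)^2 ∧ x * Real.cos (ψ/2)^2 < 1 := by
      intro ψ
      constructor
      · positivity
      · exact lt_of_le_of_lt (mul_le_of_le_one_right hx0 (Real.cos_sq_le_one _)) hx1
    have hkey : ∀ ψ : ℝ, (1 - ξ * Real.cos ψ) ^ (-(3/2) : ℝ)
        = (1 + ξ) ^ (-(3/2) : ℝ) * (1 - x * Real.cos (ψ/2)^2) ^ (-(3/2) : ℝ) := by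
      intro ψ
      have hhalf : Real.cos (ψ/2)^2 = (1 + Real.cos ψ)/2 := by
        have h := Real.cos_sq (ψ/2)
        rw [show 2 * (ψ/2) = ψ by ring] at h
        rw [h]; ring
      have hfac : 1 - ξ * Real.cos ψ = (1 + ξ) * (1 - x * Real.cos (ψ/2)^2) := by
        rw [hhalf, hx_def]
        field_simp
        ring
      rw [hfac, Real.mul_rpow hξ.le (by linarith [(hcossq ψ).2])]
    have hxn : ‖x‖ < 1 := by rw [Real.norm_eq_abs, abs_of_nonneg hx0]; exact hx1
    -- summable bound
    have hbs : Summable (fun n : ℕ => ((n:ℝ)+1) * x^n) := by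
      have hb1 := summable_pow_mul_geometric_of_norm_lt_one 1 hxn
      have hb2 := summable_geometric_of_norm_lt_one hxn
      have := hb1.add hb2
      simpa [add_mul, pow_one] using this
    set μ := MeasureTheory.volume.restrict (Set.Ioc (0:ℝ) π) with hμ
    set F : ℕ → ℝ → ℝ := fun n ψ => cc n * (x * Real.cos (ψ/2)^2)^n with hF_def
    set f : ℝ → ℝ := fun ψ => (1 - x * Real.cos (ψ/2)^2) ^ (-(3/2) : ℝ) with hf_def
    have hFcont : ∀ n, Continuous (F n) := by
      intro n
      apply Continuous.mul continuous_const
      exact (Continuous.mul continuous_const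
        (((Real.continuous_cos.comp (continuous_id.div_const 2)).pow 2))).pow n
    have hsum_int : HasSum (fun n => ∫ ψ, F n ψ ∂μ) (∫ ψ, f ψ ∂μ) := by
      apply MeasureTheory.hasSum_integral_of_dominated_convergence
        (fun (n : ℕ) (_ : ℝ) => ((n:ℝ)+1) * x^n)
      · exact fun n => (hFcont n).aestronglyMeasurable
      · intro n
        apply Filter.Eventually.of_forall
        intro ψ
        have hu := hcossq ψ
        have hle : (x * Real.cos (ψ/2)^2)^n ≤ x^n :=
          pow_le_pow_left₀ hu.1 (mul_le_of_le_one_right hx0 (Real.cos_sq_le_one _)) n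
        rw [hF_def, Real.norm_eq_abs,
          abs_of_nonneg (mul_nonneg (cc_pos n).le (pow_nonneg hu.1 n))]
        exact mul_le_mul (cc_le n) hle (pow_nonneg hu.1 n) (by positivity)
      · exact Filter.Eventually.of_forall (fun ψ => hbs)
      · exact MeasureTheory.integrable_const _
      · apply Filter.Eventually.of_forall
        intro ψ
        exact hasSum_cc (hcossq ψ).1 (hcossq ψ).2
    have hval : ∀ n, (∫ ψ, F n ψ ∂μ)
        = π * (poch (1/2) n * poch (3/2) n / (n.factorial : ℝ)^2) * x^n := by
      intro n
      have : (∫ ψ, F n ψ ∂μ) = ∫ ψ in (0:ℝ)..π, F n ψ := by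
        rw [hμ, intervalIntegral.integral_of_le Real.pi_pos.le]
      rw [this]
      have hFrw : ∀ ψ : ℝ, F n ψ = (cc n * x^n) * Real.cos (ψ/2) ^ (2*n) := by
        intro ψ
        rw [hF_def]
        simp only
        rw [mul_pow, pow_mul]
        ring
      rw [intervalIntegral.integral_congr (fun ψ _ => hFrw ψ),
        intervalIntegral.integral_const_mul, integral_cos_half_pow]
      rw [cc]
      have h3 : ((n.factorial : ℝ)) ≠ 0 := by positivity
      field_simp
    have htsum : (∫ ψ, f ψ ∂μ)
        = π * (∑' n : ℕ, poch (1/2) n * poch (3/2) n / (n.factorial : ℝ)^2 * x^n) := by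
      rw [← hsum_int.tsum_eq]
      rw [show (fun n => ∫ ψ, F n ψ ∂μ)
        = fun n => π * (poch (1/2) n * poch (3/2) n / (n.factorial : ℝ)^2 * x^n) by
          funext n; rw [hval n]; ring]
      rw [tsum_mul_left]
    calc (∫ ψ in (0:ℝ)..π, (1 - ξ * Real.cos ψ) ^ (-(3/2) : ℝ))
        = ∫ ψ in (0:ℝ)..π, (1 + ξ) ^ (-(3/2) : ℝ) * f ψ :=
          intervalIntegral.integral_congr (fun ψ _ => hkey ψ)
      _ = (1 + ξ) ^ (-(3/2) : ℝ) * ∫ ψ in (0:ℝ)..π, f ψ :=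
          intervalIntegral.integral_const_mul _ _
      _ = (1 + ξ) ^ (-(3/2) : ℝ) * ∫ ψ, f ψ ∂μ := by
          rw [hμ, intervalIntegral.integral_of_le Real.pi_pos.le]
      _ = π * (∑' n : ℕ, poch (1/2) n * poch (3/2) n / (n.factorial : ℝ)^2 * x^n)
          / (1 + ξ) ^ ((3/2) : ℝ) := by
          rw [htsum, Real.rpow_neg hξ.le, inv_mul_eq_div]
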